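/- Let [a̲,ā], [b̲,b̄], [d̲,d̄] be nonempty bounded real intervals, and define ExtDiv([a̲,ā],[b̲,b̄],[d̲,d̄]) by cases: (1) if 0 ∉ [b̲,b̄], it is the intersection of [d̲,d̄] with the interval whose endpoints are the minimum and maximum of the four endpoint quotients a̲/b̲, a̲/b̄, ā/b̲, ā/b̄; (2) if a̲ > 0 and 0 ∈ [b̲,b̄], it is the interval hull of [d̲,d̄] \ {x | a̲/b̲ < x < a̲/b̄}, where a̲/b̲ is interpreted as −∞ when b̲ = 0 and a̲/b̄ as +∞ when b̄ = 0; (3) if ā < 0 and 0 ∈ [b̲,b̄], it is the interval hull of [d̲,d̄] \ {x | ā/b̄ < x < ā/b̲}, where ā/b̄ is interpreted as −∞ when b̄ = 0 and ā/b̲ as +∞ when b̲ = 0; (4) if 0 ∈ [a̲,ā] and 0 ∈ [b̲,b̄], it is [d̲,d̄]. Then the solution set {x ∈ [d̲,d̄] | ∃α ∈ [a̲,ā], ∃β ∈ [b̲,b̄], α = β·x} is contained in ExtDiv([a̲,ā],[b̲,b̄],[d̲,d̄]). -/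

import Mathlib

open Classical

/-- The interval hull of a set of reals: `[inf S, sup S]`, empty if `S` is empty. -/
noncomputable def intervalHull (S : Set ℝ) : Set ℝ :=
  if S = ∅ then ∅ else Set.Icc (sInf S) (sSup S)

/-- The extended interval division operator.
In cases (2) and (3), a quotient `c / 0` is interpreted as `-∞` or `+∞` as
appropriate, which is encoded by dropping the corresponding strict inequality
when the denominator endpoint is zero. -/
noncomputable def ExtDiv (al au bl bu dl du : ℝ) : Set ℝ :=
  if (0 : ℝ) ∉ Set.Icc bl bu then
    -- case (1): ordinary interval division intersected with the domain
    Set.Icc dl du ∩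
      Set.Icc
        (min (min (al / bl) (al / bu)) (min (au / bl) (au / bu)))
        (max (max (al / bl) (al / bu)) (max (au / bl) (au / bu)))
  else if 0 < al then
    -- case (2): the gap is (al/bl, al/bu), with al/bl = -∞ if bl = 0 and
    -- al/bu = +∞ if bu = 0
    intervalHull (Set.Icc dl du \
      {x : ℝ | (bl = 0 ∨ al / bl < x) ∧ (bu = 0 ∨ x < al / bu)})
  else if au < 0 then
    -- case (3): the gap is (au/bu, au/bl), with au/bu = -∞ if bu = 0 and
    -- au/bl = +∞ if bl = 0
    intervalHull (Set.Icc dl du \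
      {x : ℝ | (bu = 0 ∨ au / bu < x) ∧ (bl = 0 ∨ x < au / bl)})
  else
    -- case (4): 0 ∈ [al, au] and 0 ∈ [bl, bu]
    Set.Icc dl du

/-- antitone in denominator (same-sign denominators, nonneg numerator) -/
lemma div_le_div_same_num {c t q : ℝ} (hc : 0 ≤ c) (htq : t ≤ q) (hpos : 0 < t * q) :
    c / q ≤ c / t := by
  have ht : t ≠ 0 := by rintro rfl; simp at hpos
  have hq : q ≠ 0 := by rintro rfl; simp at hpos
  have key : c / t - c / q = c * (q - t) / (t * q) := by field_simp
  have h2 : 0 ≤ c * (q - t) / (t * q) :=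
    div_nonneg (mul_nonneg hc (by linarith)) hpos.le
  linarith

lemma div_le_div_same_num' {c t q : ℝ} (hc : c ≤ 0) (htq : t ≤ q) (hpos : 0 < t * q) :
    c / t ≤ c / q := by
  have := div_le_div_same_num (c := -c) (neg_nonneg.mpr hc) htq hpos
  simp only [neg_div] at this
  linarith

lemma div_le_div_of_neg' {a b c : ℝ} (h : a ≤ b) (hc : c < 0) : b / c ≤ a / c := by
  rw [div_eq_mul_inv, div_eq_mul_inv]
  exact mul_le_mul_of_nonpos_right h (inv_nonpos.mpr hc.le)

lemma div_mem_hull {c p q t : ℝ} (hpt : p ≤ t) (htq : t ≤ q) (h : 0 < p ∨ q < 0) :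
    min (c / p) (c / q) ≤ c / t ∧ c / t ≤ max (c / p) (c / q) := by
  have hpq : 0 < p * t ∧ 0 < t * q := by
    rcases h with h | h
    · have ht : 0 < t := h.trans_le hpt
      exact ⟨mul_pos h ht, mul_pos ht (ht.trans_le htq)⟩
    · have ht : t < 0 := lt_of_le_of_lt htq h
      exact ⟨mul_pos_of_neg_of_neg (lt_of_le_of_lt hpt ht) ht, mul_pos_of_neg_of_neg ht h⟩
  rcases le_total 0 c with hc | hc
  · exact ⟨(min_le_right _ _).trans (div_le_div_same_num hc htq hpq.2),
      (div_le_div_same_num hc hpt hpq.1).trans (le_max_left _ _)⟩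
  · exact ⟨(min_le_left _ _).trans (div_le_div_same_num' hc hpt hpq.1),
      (div_le_div_same_num' hc htq hpq.2).trans (le_max_right _ _)⟩

lemma mem_intervalHull {S : Set ℝ} {x a b : ℝ} (hx : x ∈ S) (hS : S ⊆ Set.Icc a b) :
    x ∈ intervalHull S := by
  rw [intervalHull, if_neg (by intro h; rw [h] at hx; exact hx)]
  exact ⟨csInf_le (BddBelow.mono hS bddBelow_Icc) hx, le_csSup (BddAbove.mono hS bddAbove_Icc) hx⟩

/-- Soundness of extended interval division: every `x` in the domain interval
for which `α = β·x` is solvable with `α` in the numerator interval and `β` in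
the denominator interval belongs to `ExtDiv`. -/
theorem extDiv_sound (al au bl bu dl du : ℝ)
    (ha : al ≤ au) (hb : bl ≤ bu) (hd : dl ≤ du) :
    {x : ℝ | x ∈ Set.Icc dl du ∧
        ∃ α ∈ Set.Icc al au, ∃ β ∈ Set.Icc bl bu, α = β * x} ⊆
      ExtDiv al au bl bu dl du := by
  rintro x ⟨hxd, α, hα, β, hβ, hab⟩
  simp only [Set.mem_Icc] at hα hβ
  by_cases h0 : (0 : ℝ) ∈ Set.Icc bl bu
  · by_cases hal : 0 < al
    · -- case (2)
      simp only [ExtDiv, if_neg (not_not_intro h0), if_pos hal]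
      have hαpos : 0 < α := lt_of_lt_of_le hal hα.1
      have hbne : β ≠ 0 := by rintro rfl; rw [zero_mul] at hab; linarith
      have hxe : x = α / β := by
        rw [hab, mul_comm, mul_div_assoc, div_self hbne, mul_one]
      refine mem_intervalHull ⟨hxd, ?_⟩ Set.diff_subset
      rintro ⟨h1, h2⟩
      rcases hbne.lt_or_gt with hbneg | hbpos
      · have hbl : bl < 0 := lt_of_le_of_lt hβ.1 hbneg
        rcases h1 with h1 | h1
        · exact absurd h1 hbl.ne
        · have e1 : al / β ≤ al / bl :=
            div_le_div_same_num hal.le hβ.1 (mul_pos_of_neg_of_neg hbl hbneg)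
          have e2 : α / β ≤ al / β := div_le_div_of_neg' hα.1 hbneg
          rw [hxe] at h1; linarith
      · have hbu : 0 < bu := lt_of_lt_of_le hbpos hβ.2
        rcases h2 with h2 | h2
        · exact absurd h2 hbu.ne'
        · have e1 : al / bu ≤ al / β :=
            div_le_div_same_num hal.le hβ.2 (mul_pos hbpos hbu)
          have e2 : al / β ≤ α / β := (div_le_div_iff_of_pos_right hbpos).mpr hα.1
          rw [hxe] at h2; linarith
    · by_cases hau : au < 0
      · -- case (3)
        simp only [ExtDiv, if_neg (not_not_intro h0), if_neg hal, if_pos hau]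
        have hαneg : α < 0 := lt_of_le_of_lt hα.2 hau
        have hbne : β ≠ 0 := by rintro rfl; rw [zero_mul] at hab; linarith
        have hxe : x = α / β := by
          rw [hab, mul_comm, mul_div_assoc, div_self hbne, mul_one]
        refine mem_intervalHull ⟨hxd, ?_⟩ Set.diff_subset
        rintro ⟨h1, h2⟩
        rcases hbne.lt_or_gt with hbneg | hbpos
        · have hbl : bl < 0 := lt_of_le_of_lt hβ.1 hbneg
          rcases h2 with h2 | h2
          · exact absurd h2 hbl.ne
          · have e1 : au / bl ≤ au / β :=
              div_le_div_same_num' hau.le hβ.1 (mul_pos_of_neg_of_neg hbl hbneg)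
            have e2 : au / β ≤ α / β := div_le_div_of_neg' hα.2 hbneg
            rw [hxe] at h2; linarith
        · have hbu : 0 < bu := lt_of_lt_of_le hbpos hβ.2
          rcases h1 with h1 | h1
          · exact absurd h1 hbu.ne'
          · have e1 : au / β ≤ au / bu :=
              div_le_div_same_num' hau.le hβ.2 (mul_pos hbpos hbu)
            have e2 : α / β ≤ au / β := (div_le_div_iff_of_pos_right hbpos).mpr hα.2
            rw [hxe] at h1; linarith
      · -- case (4)
        simp only [ExtDiv, if_neg (not_not_intro h0), if_neg hal, if_neg hau]
        exact hxd
  · -- case (1)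
    simp only [ExtDiv, if_pos h0]
    have hbne : β ≠ 0 := by rintro rfl; exact h0 ⟨hβ.1, hβ.2⟩
    have hxe : x = α / β := by
      rw [hab, mul_comm, mul_div_assoc, div_self hbne, mul_one]
    have hdisj : 0 < bl ∨ bu < 0 := by
      by_contra h
      push_neg at h
      exact h0 (Set.mem_Icc.mpr ⟨h.1, h.2⟩)
    refine ⟨hxd, ?_, ?_⟩
    · rw [hxe]
      rcases hdisj with hbl | hbu
      · have hβpos : 0 < β := lt_of_lt_of_le hbl hβ.1
        have A := div_mem_hull (c := al) hβ.1 hβ.2 (Or.inl hbl)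
        have l1 : al / β ≤ α / β := (div_le_div_iff_of_pos_right hβpos).mpr hα.1
        linarith [min_le_left (min (al / bl) (al / bu)) (min (au / bl) (au / bu)), A.1]
      · have hβneg : β < 0 := lt_of_le_of_lt hβ.2 hbu
        have A := div_mem_hull (c := au) hβ.1 hβ.2 (Or.inr hbu)
        have l1 : au / β ≤ α / β := div_le_div_of_neg' hα.2 hβneg
        linarith [min_le_right (min (al / bl) (al / bu)) (min (au / bl) (au / bu)), A.1]
    · rw [hxe]
      rcases hdisj with hbl | hbu
      · have hβpos : 0 < β := lt_of_lt_of_le hbl hβ.1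
        have B := div_mem_hull (c := au) hβ.1 hβ.2 (Or.inl hbl)
        have l2 : α / β ≤ au / β := (div_le_div_iff_of_pos_right hβpos).mpr hα.2
        linarith [le_max_right (max (al / bl) (al / bu)) (max (au / bl) (au / bu)), B.2]
      · have hβneg : β < 0 := lt_of_le_of_lt hβ.2 hbu
        have B := div_mem_hull (c := al) hβ.1 hβ.2 (Or.inr hbu)
        have l2 : α / β ≤ al / β := div_le_div_of_neg' hα.1 hβneg
        linarith [le_max_left (max (al / bl) (al / bu)) (max (au / bl) (au / bu)), B.2]
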